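/- Let T be a tree and S = (S_A, S_B, S_C) a labeling of T such that (T, S) belongs to the family 𝒯. Then S_A is a semitotal dominating set of T. -/

import Mathlib

open SimpleGraph

/-- A dominating set: every vertex outside `S` has a neighbor in `S`. -/
def IsDominatingSet {V : Type} (G : SimpleGraph V) (S : Set V) : Prop :=
  ∀ v ∉ S, ∃ u ∈ S, G.Adj u v

/-- A total dominating set: every vertex has a neighbor in `S`. -/
def IsTotalDominatingSet {V : Type} (G : SimpleGraph V) (S : Set V) : Prop :=
  ∀ v : V, ∃ u ∈ S, G.Adj u v

/-- `u` is within distance two of `v`. -/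
def WithinTwo {V : Type} (G : SimpleGraph V) (u v : V) : Prop :=
  G.Adj u v ∨ ∃ w, G.Adj u w ∧ G.Adj w v

/-- A semitotal dominating set: a dominating set in which every vertex is within
distance two of another vertex of the set. -/
def IsSemitotalDominatingSet {V : Type} (G : SimpleGraph V) (S : Set V) : Prop :=
  IsDominatingSet G S ∧ ∀ v ∈ S, ∃ u ∈ S, u ≠ v ∧ WithinTwo G u v

/-- The domination number `γ(G)`. -/
noncomputable def dominationNumber {V : Type} (G : SimpleGraph V) : ℕ :=
  sInf {n | ∃ S : Set V, IsDominatingSet G S ∧ S.ncard = n}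

/-- The total domination number `γ_t(G)`. -/
noncomputable def totalDominationNumber {V : Type} (G : SimpleGraph V) : ℕ :=
  sInf {n | ∃ S : Set V, IsTotalDominatingSet G S ∧ S.ncard = n}

/-- The semitotal domination number `γ_t2(G)`. -/
noncomputable def semitotalDominationNumber {V : Type} (G : SimpleGraph V) : ℕ :=
  sInf {n | ∃ S : Set V, IsSemitotalDominatingSet G S ∧ S.ncard = n}

/-- A leaf: a vertex of degree one. -/
def IsLeaf {V : Type} (G : SimpleGraph V) (v : V) : Prop :=
  (G.neighborSet v).ncard = 1

/-- A support vertex: a vertex adjacent to a leaf. -/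
def IsSupport {V : Type} (G : SimpleGraph V) (v : V) : Prop :=
  ∃ u, G.Adj v u ∧ IsLeaf G u

/-- A star: a graph isomorphic to `K_{1,m}` for some `m ≥ 1`. -/
def IsStar {V : Type} (G : SimpleGraph V) : Prop :=
  ∃ m : ℕ, 1 ≤ m ∧ Nonempty (G ≃g completeBipartiteGraph Unit (Fin m))

/-- The graph obtained from the disjoint union of `G` and `H` by adding
the single edge joining `v : V` to `w : W`. -/
def attach {V W : Type} (G : SimpleGraph V) (H : SimpleGraph W) (v : V) (w : W) :
    SimpleGraph (V ⊕ W) where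
  Adj x y :=
    match x, y with
    | Sum.inl a, Sum.inl b => G.Adj a b
    | Sum.inr a, Sum.inr b => H.Adj a b
    | Sum.inl a, Sum.inr b => a = v ∧ b = w
    | Sum.inr a, Sum.inl b => b = v ∧ a = w
  symm := by
    constructor
    rintro (a | a) (b | b) h
    · exact G.adj_symm h
    · exact ⟨h.1, h.2⟩
    · exact ⟨h.1, h.2⟩
    · exact H.adj_symm h
  loopless := by
    constructor
    rintro (a | a) h
    · exact G.irrefl h
    · exact H.irrefl h

/-- The statuses used to label the vertices of trees in the family `𝒯`. -/
inductive Label : Type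
  | A | B | C
deriving DecidableEq

/-- The labeling of the path `P₅` assigning `A` to the two support vertices,
`C` to the two leaves and `B` to the center. -/
def pathLabel : Fin 5 → Label
  | 0 => Label.C
  | 1 => Label.A
  | 2 => Label.B
  | 3 => Label.A
  | 4 => Label.C

/-- The family `𝒯` of labeled trees: it contains the labeled path `P₅`, and is closed
under operation `𝒪₁` (attach a new leaf labeled `C` to a vertex labeled `A`), operation
`𝒪₂` (attach a labeled path `P₅` to a degree-one vertex labeled `C`), and under
isomorphism of labeled graphs. -/
inductive TFamily : ∀ {V : Type}, SimpleGraph V → (V → Label) → Prop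
  | base : TFamily (SimpleGraph.pathGraph 5) pathLabel
  | op1 {V : Type} {G : SimpleGraph V} {f : V → Label} (v : V)
      (hv : f v = Label.A) (h : TFamily G f) :
      TFamily (attach G (⊥ : SimpleGraph (Fin 1)) v 0)
        (Sum.elim f (fun _ => Label.C))
  | op2 {V : Type} {G : SimpleGraph V} {f : V → Label} (v : V)
      (hv : f v = Label.C) (hdeg : (G.neighborSet v).ncard = 1) (h : TFamily G f) :
      TFamily (attach G (SimpleGraph.pathGraph 5) v 0) (Sum.elim f pathLabel)
  | iso {V W : Type} {G : SimpleGraph V} {H : SimpleGraph W} {f : V → Label}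
      (e : G ≃g H) (h : TFamily G f) : TFamily H (fun w => f (e.symm w))

/-- The subdivided star with `t` leaves: center `none`, and for each `i : Fin t`
a path `none — some (i,0) — some (i,1)`. -/
def subdividedStar (t : ℕ) : SimpleGraph (Option (Fin t × Fin 2)) :=
  SimpleGraph.fromRel (fun x y =>
    match x, y with
    | none, some p => p.2 = 0
    | some p, some q => p.1 = q.1 ∧ p.2 = 0 ∧ q.2 = 1
    | _, _ => False)

/-- The tree `Y` with three leaves, obtained from the star `K_{1,3}` with center `0`
by subdividing exactly one edge: edges `0-1`, `0-2`, `0-3`, `3-4`.  Its leaves are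
`1`, `2`, `4`; the leaf-neighbors of the center are `1` and `2`. -/
def Ytree : SimpleGraph (Fin 5) :=
  SimpleGraph.fromRel (fun x y =>
    (x = 0 ∧ y = 1) ∨ (x = 0 ∧ y = 2) ∨ (x = 0 ∧ y = 3) ∨ (x = 3 ∧ y = 4))

/-- An almost dominating set of `G` relative to `v`: dominates every vertex except
possibly `v`. -/
def IsAlmostDominatingSet {V : Type} (G : SimpleGraph V) (v : V) (S : Set V) : Prop :=
  ∀ w, w ≠ v → w ∉ S → ∃ u ∈ S, G.Adj u w

/-- The almost domination number `γ(G; v)`. -/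
noncomputable def almostDominationNumber {V : Type} (G : SimpleGraph V) (v : V) : ℕ :=
  sInf {n | ∃ S : Set V, IsAlmostDominatingSet G v S ∧ S.ncard = n}

/-- The family `𝒪` of trees: all trees obtainable from the path `P₄` by a finite
sequence of the operations `𝒪₁`–`𝒪₄` (and taking isomorphic copies). -/
inductive OFamily : ∀ {V : Type}, SimpleGraph V → Prop
  | base : OFamily (SimpleGraph.pathGraph 4)
  | op1 {V : Type} {G : SimpleGraph V} (v : V)
      (hv : ∃ S : Set V, IsSemitotalDominatingSet G S ∧
        S.ncard = semitotalDominationNumber G ∧ v ∈ S)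
      (h : OFamily G) :
      OFamily (attach G (⊥ : SimpleGraph (Fin 1)) v 0)
  | op2short {V : Type} {G : SimpleGraph V} (v : V)
      (hv : almostDominationNumber G v = dominationNumber G) (h : OFamily G) :
      OFamily (attach G (SimpleGraph.pathGraph 2) v 0)
  | op2long {V : Type} {G : SimpleGraph V} (v : V)
      (hv : almostDominationNumber G v = dominationNumber G) (h : OFamily G) :
      OFamily (attach G (SimpleGraph.pathGraph 5) v 0)
  | op3 {V : Type} {G : SimpleGraph V} (v : V) (t : ℕ) (ht : 2 ≤ t) (h : OFamily G) :
      OFamily (attach G (subdividedStar t) v none)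
  | op4 {V : Type} {G : SimpleGraph V} (v : V) (h : OFamily G) :
      OFamily (attach G Ytree v 1)
  | iso {V W : Type} {G : SimpleGraph V} {H : SimpleGraph W}
      (e : G ≃g H) (h : OFamily G) : OFamily H

lemma tFamily_aux : ∀ {V : Type} {G : SimpleGraph V} {f : V → Label},
    TFamily G f → IsSemitotalDominatingSet G {v | f v = Label.A} := by
  intro V G f h
  induction h with
  | base =>
      constructor
      · intro w hw
        simp only [Set.mem_setOf_eq] at hw ⊢
        fin_cases w <;> simp only [pathLabel] at hw ⊢
        · exact ⟨1, rfl, by rw [SimpleGraph.pathGraph_adj]; decide⟩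
        · exact absurd trivial hw
        · exact ⟨1, rfl, by rw [SimpleGraph.pathGraph_adj]; decide⟩
        · exact absurd trivial hw
        · exact ⟨3, rfl, by rw [SimpleGraph.pathGraph_adj]; decide⟩
      · intro v hv
        simp only [Set.mem_setOf_eq] at hv ⊢
        fin_cases v <;> simp only [pathLabel] at hv ⊢
        · exact absurd hv (by decide)
        · exact ⟨3, rfl, by decide, Or.inr ⟨2, by rw [SimpleGraph.pathGraph_adj]; decide,
            by rw [SimpleGraph.pathGraph_adj]; decide⟩⟩
        · exact absurd hv (by decide)
        · exact ⟨1, rfl, by decide, Or.inr ⟨2, by rw [SimpleGraph.pathGraph_adj]; decide,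
            by rw [SimpleGraph.pathGraph_adj]; decide⟩⟩
        · exact absurd hv (by decide)
  | op1 v hv h ih =>
      obtain ⟨ihd, ihs⟩ := ih
      constructor
      · rintro (a | a) ha
        · obtain ⟨u, hu, hadj⟩ := ihd a ha
          exact ⟨Sum.inl u, hu, hadj⟩
        · exact ⟨Sum.inl v, hv, rfl, Subsingleton.elim _ _⟩
      · rintro (a | a) ha
        · obtain ⟨u, hu, hne, hw⟩ := ihs a ha
          refine ⟨Sum.inl u, hu, by simpa using hne, ?_⟩
          rcases hw with h1 | ⟨w, h1, h2⟩
          · exact Or.inl h1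
          · exact Or.inr ⟨Sum.inl w, h1, h2⟩
        · simp [Set.mem_setOf_eq] at ha
  | op2 v hv hdeg h ih =>
      obtain ⟨ihd, ihs⟩ := ih
      constructor
      · rintro (a | a) ha
        · obtain ⟨u, hu, hadj⟩ := ihd a ha
          exact ⟨Sum.inl u, hu, hadj⟩
        · simp only [Set.mem_setOf_eq, Sum.elim_inr] at ha
          fin_cases a <;> simp only [pathLabel] at ha ⊢
          · exact ⟨Sum.inr 1, rfl, by
              show (SimpleGraph.pathGraph 5).Adj 1 0
              rw [SimpleGraph.pathGraph_adj]; decide⟩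
          · exact absurd trivial ha
          · exact ⟨Sum.inr 1, rfl, by
              show (SimpleGraph.pathGraph 5).Adj 1 2
              rw [SimpleGraph.pathGraph_adj]; decide⟩
          · exact absurd trivial ha
          · exact ⟨Sum.inr 3, rfl, by
              show (SimpleGraph.pathGraph 5).Adj 3 4
              rw [SimpleGraph.pathGraph_adj]; decide⟩
      · rintro (a | a) ha
        · obtain ⟨u, hu, hne, hw⟩ := ihs a ha
          refine ⟨Sum.inl u, hu, by simpa using hne, ?_⟩
          rcases hw with h1 | ⟨w, h1, h2⟩
          · exact Or.inl h1
          · exact Or.inr ⟨Sum.inl w, h1, h2⟩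
        · simp only [Set.mem_setOf_eq, Sum.elim_inr] at ha
          fin_cases a <;> simp only [pathLabel] at ha ⊢
          · exact absurd ha (by decide)
          · refine ⟨Sum.inr 3, rfl, by simp, Or.inr ⟨Sum.inr 2, ?_, ?_⟩⟩
            · show (SimpleGraph.pathGraph 5).Adj 3 2
              rw [SimpleGraph.pathGraph_adj]; decide
            · show (SimpleGraph.pathGraph 5).Adj 2 1
              rw [SimpleGraph.pathGraph_adj]; decide
          · exact absurd ha (by decide)
          · refine ⟨Sum.inr 1, rfl, by simp, Or.inr ⟨Sum.inr 2, ?_, ?_⟩⟩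
            · show (SimpleGraph.pathGraph 5).Adj 1 2
              rw [SimpleGraph.pathGraph_adj]; decide
            · show (SimpleGraph.pathGraph 5).Adj 2 3
              rw [SimpleGraph.pathGraph_adj]; decide
          · exact absurd ha (by decide)
  | iso e h ih =>
      obtain ⟨ihd, ihs⟩ := ih
      constructor
      · intro w hw
        obtain ⟨u, hu, hadj⟩ := ihd (e.symm w) hw
        refine ⟨e u, by simpa [Set.mem_setOf_eq] using hu, ?_⟩
        have h2 := e.map_adj_iff.mpr hadj
        simpa using h2
      · intro w hw
        obtain ⟨u, hu, hne, hwt⟩ := ihs (e.symm w) hw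
        refine ⟨e u, by simpa [Set.mem_setOf_eq, e.symm_apply_apply] using hu, ?_, ?_⟩
        · intro hc
          apply hne
          have := congrArg e.symm hc
          simpa [e.symm_apply_apply] using this
        · rcases hwt with h1 | ⟨x, h1, h2⟩
          · left
            have := e.map_adj_iff.mpr h1
            simpa [e.apply_symm_apply] using this
          · right
            refine ⟨e x, ?_, ?_⟩
            · exact e.map_adj_iff.mpr h1
            · have := e.map_adj_iff.mpr h2
              simpa [e.apply_symm_apply] using this

/-- If `(T, S) ∈ 𝒯`, then `S_A` is a semitotal dominating set of `T`. -/
theorem tFamily_A_isSemitotalDominatingSet {V : Type} [Fintype V] (T : SimpleGraph V)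
    (f : V → Label) (hT : T.IsTree) (h : TFamily T f) :
    IsSemitotalDominatingSet T {v : V | f v = Label.A} := by
  exact tFamily_aux h
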